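/- Let (X, μ) and (Y, ν) be standard Borel spaces equipped with finite Borel measures and let m = μ × ν be the product measure on X × Y. If a measurable set E ⊆ X × Y is X-scattered with respect to μ, then there exist measurable sets A_j ⊆ X and B_j ⊆ Y (j ∈ ℕ) such that the symmetric difference of E and ⋃_{j∈ℕ} (A_j × B_j) is m-null. -/

import Mathlib

open MeasureTheory

/-- A family `F` of subsets of `X` is `μ`-scattered if every decreasing sequence of
members of `F` `μ`-stabilizes: there is `N` such that `μ (U N \ U n) = 0` for all `n ≥ N`. -/
def MuScattered {X : Type*} [MeasurableSpace X] (μ : Measure X) (F : Set (Set X)) : Prop :=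
  ∀ U : ℕ → Set X, (∀ n, U n ∈ F) → (∀ n, U (n + 1) ⊆ U n) →
    ∃ N : ℕ, ∀ n, N ≤ n → μ (U N \ U n) = 0

/-- A set `E ⊆ X × Y` is `X`-scattered (with respect to `μ`) if the family of all finite
(nonempty) intersections of `X`-sections of `E` is `μ`-scattered. -/
def XScattered {X Y : Type*} [MeasurableSpace X] (μ : Measure X) (E : Set (X × Y)) : Prop :=
  MuScattered μ
    {U : Set X | ∃ s : Finset Y, s.Nonempty ∧ U = ⋂ y ∈ s, {x : X | (x, y) ∈ E}}

/-- Any `X`-scattered measurable subset of the product of two standard Borel spaces with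
finite measures is `μ × ν`-equivalent to a countable union of measurable rectangles. -/
theorem xScattered_symmDiff_iUnion_rectangles_null
    {X Y : Type*} [MeasurableSpace X] [MeasurableSpace Y]
    [StandardBorelSpace X] [StandardBorelSpace Y]
    (μ : Measure X) (ν : Measure Y) [IsFiniteMeasure μ] [IsFiniteMeasure ν]
    (E : Set (X × Y)) (hE : MeasurableSet E) (hscat : XScattered μ E) :
    ∃ (A : ℕ → Set X) (B : ℕ → Set Y),
      (∀ j, MeasurableSet (A j)) ∧ (∀ j, MeasurableSet (B j)) ∧
      (μ.prod ν) (symmDiff E (⋃ j, A j ×ˢ B j)) = 0 := by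
  classical
  set sec : Y → Set X := fun y => {x : X | (x, y) ∈ E} with hsec_def
  have hsecm : ∀ y, MeasurableSet (sec y) := fun y => hE.preimage measurable_prodMk_right
  set F : Set (Set X) :=
    {U : Set X | ∃ s : Finset Y, s.Nonempty ∧ U = ⋂ y ∈ s, sec y} with hF_def
  have hFm : ∀ V ∈ F, MeasurableSet V := by
    rintro V ⟨s, -, rfl⟩
    exact Finset.measurableSet_biInter s fun y _ => hsecm y
  have hFinter : ∀ U ∈ F, ∀ V ∈ F, U ∩ V ∈ F := by
    rintro U ⟨s, hs, rfl⟩ V ⟨t, ht, rfl⟩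
    exact ⟨s ∪ t, hs.mono Finset.subset_union_left, by ext x; simp [Finset.mem_union, or_imp, forall_and]⟩
  have hscat' : ∀ U : ℕ → Set X, (∀ n, U n ∈ F) → (∀ n, U (n + 1) ⊆ U n) →
      ∃ N : ℕ, ∀ n, N ≤ n → μ (U N \ U n) = 0 := hscat
  -- separability
  obtain ⟨𝒟, h𝒟c, h𝒟d⟩ := exists_countable_measureDense (μ := μ)
  have approx : ∀ V, MeasurableSet V → ∀ ε : ENNReal, 0 < ε → ∃ d ∈ 𝒟, μ (symmDiff V d) < ε := by
    intro V hV ε hε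
    obtain ⟨r, hr0, hrε⟩ : ∃ r : ℝ, 0 < r ∧ ENNReal.ofReal r ≤ ε := by
      rcases eq_or_ne ε ⊤ with rfl | hne
      · exact ⟨1, one_pos, le_top⟩
      · exact ⟨ε.toReal, ENNReal.toReal_pos hε.ne' hne, by rw [ENNReal.ofReal_toReal hne]⟩
    obtain ⟨d, hd, hlt⟩ := h𝒟d.approx V hV (measure_ne_top μ V) r hr0
    exact ⟨d, hd, hlt.trans_le hrε⟩
  -- countable dense subset of F
  have hεpow : ∀ n : ℕ, (0:ENNReal) < 2⁻¹ ^ n := fun n =>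
    ENNReal.pow_pos (by norm_num) n
  let pick : Set X × ℕ → Set X := fun p =>
    if h : ∃ W ∈ F, μ (symmDiff W p.1) < 2⁻¹ ^ p.2 then h.choose else ∅
  let D : Set (Set X) := F ∩ (pick '' (𝒟 ×ˢ (Set.univ : Set ℕ)))
  have hDF : D ⊆ F := Set.inter_subset_left
  have hDc : D.Countable :=
    Set.Countable.mono Set.inter_subset_right ((h𝒟c.prod Set.countable_univ).image pick)
  have hDdense : ∀ V ∈ F, ∀ ε : ENNReal, 0 < ε → ∃ g ∈ D, μ (symmDiff V g) < ε := by
    intro V hV ε hε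
    obtain ⟨n, hn⟩ : ∃ n : ℕ, (2:ENNReal)⁻¹ ^ n < ε / 2 :=
      ENNReal.exists_inv_two_pow_lt (by simp [hε.ne', ENNReal.div_eq_zero_iff])
    obtain ⟨d, hd𝒟, hdlt⟩ := approx V (hFm V hV) _ (hεpow n)
    have hex : ∃ W ∈ F, μ (symmDiff W d) < 2⁻¹ ^ n := ⟨V, hV, hdlt⟩
    have hgF : pick (d, n) ∈ F := by
      simp only [pick, dif_pos hex]
      exact hex.choose_spec.1
    have hglt : μ (symmDiff (pick (d, n)) d) < 2⁻¹ ^ n := by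
      simp only [pick, dif_pos hex]
      exact hex.choose_spec.2
    refine ⟨pick (d, n), ⟨hgF, ⟨(d, n), ⟨hd𝒟, Set.mem_univ _⟩, rfl⟩⟩, ?_⟩
    calc μ (symmDiff V (pick (d, n)))
        ≤ μ (symmDiff V d) + μ (symmDiff d (pick (d, n))) := measure_symmDiff_le _ _ _
      _ < ε / 2 + ε / 2 := by
          have : μ (symmDiff d (pick (d, n))) < 2⁻¹ ^ n := by rwa [symmDiff_comm]
          exact ENNReal.add_lt_add (hdlt.trans hn) (this.trans hn)
      _ = ε := ENNReal.add_halves ε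
  -- enumerate D
  obtain ⟨f, hfm, hfD⟩ : ∃ f : ℕ → Set X,
      (∀ n, MeasurableSet (f n)) ∧ ∀ V ∈ D, ∃ n, f n = V := by
    rcases D.eq_empty_or_nonempty with hDe | hDne
    · exact ⟨fun _ => ∅, fun _ => MeasurableSet.empty, fun V hV => by simp [hDe] at hV⟩
    · obtain ⟨f, hf⟩ := Set.Countable.exists_eq_range hDc hDne
      refine ⟨f, fun n => hFm _ (hDF (by rw [hf]; exact Set.mem_range_self n)), ?_⟩
      intro V hV
      rw [hf] at hV
      obtain ⟨n, hn⟩ := hV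
      exact ⟨n, hn⟩
  -- rectangles
  let enc : ℕ → Finset ℕ := fun n => (Encodable.decode (α := Finset ℕ) n).getD ∅
  have henc : ∀ t : Finset ℕ, enc (Encodable.encode t) = t := by
    intro t; simp [enc, Encodable.encodek]
  let A : ℕ → Set X := fun n => ⋂ j ∈ enc n, f j
  let B : ℕ → Set Y := fun n => {y | μ (A n \ sec y) = 0}
  have hA : ∀ n, MeasurableSet (A n) :=
    fun n => Finset.measurableSet_biInter _ fun j _ => hfm j
  have hBfun : ∀ n, Measurable fun y => μ (A n \ sec y) := by
    intro n
    have h1 : MeasurableSet ((A n ×ˢ (Set.univ : Set Y)) \ E) :=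
      ((hA n).prod MeasurableSet.univ).diff hE
    have h2 : ∀ y, ((fun x => (x, y)) ⁻¹' ((A n ×ˢ (Set.univ : Set Y)) \ E)) = A n \ sec y := by
      intro y; ext x; simp [sec]
    simpa [h2] using measurable_measure_prodMk_right (μ := μ) h1
  have hB : ∀ n, MeasurableSet (B n) :=
    fun n => hBfun n (measurableSet_singleton 0)
  -- core approximation lemma
  have core : ∀ (y : Y) (n : ℕ), ∃ i, y ∈ B i ∧ μ (sec y \ A i) ≤ 2⁻¹ ^ n := by
    intro y n
    have hsF : sec y ∈ F := ⟨{y}, Finset.singleton_nonempty y, by simp⟩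
    have hd : ∀ j : ℕ, ∃ g ∈ D, μ (symmDiff (sec y) g) < 2⁻¹ ^ (n + 1 + j) :=
      fun j => hDdense _ hsF _ (hεpow _)
    choose d hdD hdlt using hd
    let W : ℕ → Set X := fun m => ⋂ j ∈ Finset.range (m + 1), d j
    have hWF : ∀ m, W m ∈ F := by
      intro m
      induction m with
      | zero => simpa [W] using hDF (hdD 0)
      | succ m ih =>
        have : W (m + 1) = W m ∩ d (m + 1) := by
          simp only [W, Finset.range_add_one, Finset.set_biInter_insert]
          rw [Set.inter_comm]
        rw [this]
        exact hFinter _ ih _ (hDF (hdD (m + 1)))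
    have hWdec : ∀ m, W (m + 1) ⊆ W m := by
      intro m
      apply Set.biInter_subset_biInter_left
      intro j hj
      exact Finset.mem_range.mpr (Nat.lt_succ_of_lt (Finset.mem_range.mp hj))
    have hWsub : ∀ m j, j ≤ m → W m ⊆ d j := by
      intro m j hj
      exact Set.biInter_subset_of_mem (Finset.mem_range.mpr (Nat.lt_succ_of_le hj))
    obtain ⟨N, hN⟩ := hscat' W hWF hWdec
    -- W N is a finite intersection of f's
    choose midx hmidx using fun j => hfD (d j) (hdD j)
    let t : Finset ℕ := (Finset.range (N + 1)).image midx
    have hAt : A (Encodable.encode t) = W N := by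
      simp only [A, henc]
      ext x
      simp only [Set.mem_iInter, W, t, Finset.mem_image, Finset.mem_range]
      constructor
      · intro h j hj
        have := h (midx j) ⟨j, Finset.mem_range.mp (Finset.mem_range.mpr (by exact hj)), rfl⟩
        rwa [hmidx j] at this
      · rintro h i ⟨j, hj, rfl⟩
        rw [hmidx j]
        exact h j hj
    have hdiff : ∀ j, μ (d j \ sec y) ≤ 2⁻¹ ^ (n + 1 + j) ∧ μ (sec y \ d j) ≤ 2⁻¹ ^ (n + 1 + j) := by
      intro j
      constructor
      · exact le_trans (measure_mono fun x hx => Or.inr hx) (hdlt j).le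
      · exact le_trans (measure_mono fun x hx => Or.inl hx) (hdlt j).le
    have zero1 : μ (W N \ sec y) = 0 := by
      have claim1 : ∀ i, N ≤ i → μ (W N \ sec y) ≤ 2⁻¹ ^ (n + 1 + i) := by
        intro i hi
        have hsub : W N \ sec y ⊆ (W N \ d i) ∪ (d i \ sec y) := by
          intro x hx
          by_cases hxd : x ∈ d i
          · exact Or.inr ⟨hxd, hx.2⟩
          · exact Or.inl ⟨hx.1, hxd⟩
        have h0 : μ (W N \ d i) = 0 := by
          have h0' : μ (W N \ W i) = 0 := hN i hi
          refine measure_mono_null ?_ h0'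
          intro x hx
          exact ⟨hx.1, fun h => hx.2 (hWsub i i le_rfl h)⟩
        calc μ (W N \ sec y) ≤ μ (W N \ d i) + μ (d i \ sec y) :=
              le_trans (measure_mono hsub) (measure_union_le _ _)
          _ ≤ 0 + 2⁻¹ ^ (n + 1 + i) := add_le_add h0.le (hdiff i).1
          _ = 2⁻¹ ^ (n + 1 + i) := zero_add _
      by_contra hc
      obtain ⟨k, hk⟩ := ENNReal.exists_inv_two_pow_lt hc
      have h1 := claim1 (N + k) (Nat.le_add_right N k)
      have h2 : (2:ENNReal)⁻¹ ^ (n + 1 + (N + k)) ≤ 2⁻¹ ^ k :=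
        pow_le_pow_of_le_one zero_le (by norm_num) (by omega)
      exact absurd (h1.trans h2) (not_le.mpr hk)
    have claim2 : μ (sec y \ W N) ≤ 2⁻¹ ^ n := by
      have hsplit : sec y \ W N ⊆ ⋃ j ∈ Finset.range (N + 1), (sec y \ d j) := by
        intro x hx
        have : ∃ j ∈ Finset.range (N + 1), x ∉ d j := by
          by_contra hcon
          push_neg at hcon
          exact hx.2 (Set.mem_iInter₂.mpr hcon)
        obtain ⟨j, hj, hxd⟩ := this
        exact Set.mem_biUnion hj ⟨hx.1, hxd⟩
      calc μ (sec y \ W N) ≤ ∑ j ∈ Finset.range (N + 1), μ (sec y \ d j) :=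
            le_trans (measure_mono hsplit) (measure_biUnion_finset_le _ _)
        _ ≤ ∑ j ∈ Finset.range (N + 1), 2⁻¹ ^ (n + 1 + j) :=
            Finset.sum_le_sum fun j _ => (hdiff j).2
        _ ≤ ∑' j : ℕ, 2⁻¹ ^ (n + 1 + j) := ENNReal.sum_le_tsum _
        _ = 2⁻¹ ^ n := by
            simp_rw [pow_add]
            rw [ENNReal.tsum_mul_left, ENNReal.tsum_geometric,
              ENNReal.one_sub_inv_two, inv_inv, pow_one, mul_assoc,
              ENNReal.inv_mul_cancel (by norm_num) (by norm_num), mul_one]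
    refine ⟨Encodable.encode t, ?_, ?_⟩
    · show μ (A (Encodable.encode t) \ sec y) = 0
      rw [hAt]; exact zero1
    · rw [hAt]; exact claim2
  refine ⟨A, B, hA, hB, ?_⟩
  set U : Set (X × Y) := ⋃ j, A j ×ˢ B j with hU_def
  have hUm : MeasurableSet U := MeasurableSet.iUnion fun j => (hA j).prod (hB j)
  have hEU : μ.prod ν (E \ U) = 0 := by
    rw [Measure.prod_apply_symm (hE.diff hUm)]
    have hzero : ∀ y, μ ((fun x => (x, y)) ⁻¹' (E \ U)) = 0 := by
      intro y
      have hle : ∀ n : ℕ, μ ((fun x => (x, y)) ⁻¹' (E \ U)) ≤ 2⁻¹ ^ n := by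
        intro n
        obtain ⟨i, hiB, hile⟩ := core y n
        refine le_trans (measure_mono ?_) hile
        intro x hx
        refine ⟨hx.1, fun hxA => hx.2 ?_⟩
        exact Set.mem_iUnion.mpr ⟨i, ⟨hxA, hiB⟩⟩
      by_contra hc
      obtain ⟨k, hk⟩ := ENNReal.exists_inv_two_pow_lt hc
      exact absurd (hle k) (not_le.mpr hk)
    rw [lintegral_congr hzero, lintegral_zero]
  have hUE : μ.prod ν (U \ E) = 0 := by
    have hsub : U \ E ⊆ ⋃ j, (A j ×ˢ B j \ E) := by
      intro p hp
      obtain ⟨j, hj⟩ := Set.mem_iUnion.mp hp.1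
      exact Set.mem_iUnion.mpr ⟨j, hj, hp.2⟩
    refine measure_mono_null hsub (measure_iUnion_null fun j => ?_)
    rw [Measure.prod_apply_symm (((hA j).prod (hB j)).diff hE)]
    have hzero : ∀ y, μ ((fun x => (x, y)) ⁻¹' (A j ×ˢ B j \ E)) = 0 := by
      intro y
      by_cases hyB : y ∈ B j
      · have hsub2 : (fun x => (x, y)) ⁻¹' (A j ×ˢ B j \ E) ⊆ A j \ sec y :=
          fun x hx => ⟨hx.1.1, hx.2⟩
        exact measure_mono_null hsub2 hyB
      · have : (fun x => (x, y)) ⁻¹' (A j ×ˢ B j \ E) = ∅ := by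
          ext x
          simp only [Set.mem_preimage, Set.mem_empty_iff_false, iff_false]
          intro hx
          exact hyB hx.1.2
        simp [this]
    rw [lintegral_congr hzero, lintegral_zero]
  have := measure_union_null hEU hUE
  simpa [Set.symmDiff_def, Set.sup_eq_union] using this
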